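/- arXiv:1403.0895 — 4 statements merged into one kernel-verified Lean document; each statement's English description precedes it below -/
import Mathlib

section
/- Let (η_k)_{k∈ℕ}, (d_k)_{k∈ℕ}, and (E_k)_{k∈ℕ} be sequences of nonnegative real numbers, and let μ ∈ [0,1), γ ≥ 0, c ≥ 0, C_u ≥ 0 be constants such that: (i) η_{k+1} ≤ μ·η_k + γ·d_k for all k ∈ ℕ (estimator reduction); (ii) ∑_{k=ℓ}^{N} d_k ≤ c·E_ℓ for all natural numbers ℓ ≤ N (general quasi-orthogonality); (iii) E_ℓ ≤ C_u·η_ℓ for all ℓ ∈ ℕ (global reliability). Set C = γ·c·C_u and ρ = (μ+C)/(1+C). Then ρ < 1 and η_k ≤ ((1+C)/(1−μ))·ρ^{k−ℓ}·η_ℓ for all natural numbers k ≥ ℓ. -/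
/-- abstract conditional geometric error reduction. From estimator reduction,
general quasi-orthogonality, and global reliability, the estimator sequence decays
geometrically with rate `ρ = (μ + C)/(1 + C)` where `C = γ * c * Cu`. -/
theorem stmt_3 (η d E : ℕ → ℝ) (μ γ c Cu : ℝ)
    (hη : ∀ k, 0 ≤ η k) (hd : ∀ k, 0 ≤ d k) (hE : ∀ k, 0 ≤ E k)
    (hμ0 : 0 ≤ μ) (hμ1 : μ < 1) (hγ : 0 ≤ γ) (hc : 0 ≤ c) (hCu : 0 ≤ Cu)
    (hred : ∀ k, η (k + 1) ≤ μ * η k + γ * d k)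
    (hqo : ∀ ℓ N : ℕ, ℓ ≤ N → ∑ k ∈ Finset.Icc ℓ N, d k ≤ c * E ℓ)
    (hrel : ∀ ℓ, E ℓ ≤ Cu * η ℓ) :
    (μ + γ * c * Cu) / (1 + γ * c * Cu) < 1 ∧
      ∀ ℓ k : ℕ, ℓ ≤ k →
        η k ≤ ((1 + γ * c * Cu) / (1 - μ)) *
          ((μ + γ * c * Cu) / (1 + γ * c * Cu)) ^ (k - ℓ) * η ℓ := by
  have hC : (0:ℝ) ≤ γ * c * Cu := by positivity
  set C := γ * c * Cu with hCdef
  have h1C : (0:ℝ) < 1 + C := by linarith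
  have hρlt : (μ + C) / (1 + C) < 1 := (div_lt_one h1C).2 (by linarith)
  refine ⟨hρlt, ?_⟩
  set ρ := (μ + C) / (1 + C) with hρdef
  have hρ0 : 0 ≤ ρ := div_nonneg (by linarith) h1C.le
  -- partial sums
  set f : ℕ → ℕ → ℝ := fun N m => ∑ j ∈ Finset.Icc m N, η j with hfdef
  have hf0 : ∀ N m, 0 ≤ f N m := fun N m =>
    Finset.sum_nonneg fun j _ => hη j
  have hsplit : ∀ N m, m ≤ N → f N m = η m + f N (m + 1) := by
    intro N m hmN
    have h1 : Finset.Icc m N = insert m (Finset.Ioc m N) :=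
      (Finset.Ioc_insert_left hmN).symm
    have h2 : Finset.Ioc m N = Finset.Icc (m + 1) N := by
      rw [← Finset.Icc_add_one_left_eq_Ioc]
    simp only [hfdef, h1, h2]
    rw [Finset.sum_insert (by simp)]
  have key : ∀ N m, m ≤ N → f N (m + 1) ≤ μ * f N m + C * η m := by
    intro N m hmN
    rcases eq_or_lt_of_le hmN with rfl | hmN'
    · have : f m (m + 1) = 0 := by
        simp [hfdef, Finset.Icc_eq_empty_of_lt (Nat.lt_succ_self _)]
      rw [this]
      have := hη m
      have := hf0 m m
      nlinarith
    · obtain ⟨M, rfl⟩ : ∃ M, N = M + 1 :=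
        ⟨N - 1, by omega⟩
      have hmM : m ≤ M := Nat.lt_succ_iff.mp hmN'
      have hshift : f (M + 1) (m + 1) = ∑ j ∈ Finset.Icc m M, η (j + 1) := by
        simp only [hfdef]
        rw [← Finset.map_add_right_Icc, Finset.sum_map]
        simp [addRightEmbedding]
      have h1 : f (M + 1) (m + 1) ≤ μ * (∑ j ∈ Finset.Icc m M, η j)
          + γ * (∑ j ∈ Finset.Icc m M, d j) := by
        rw [hshift, Finset.mul_sum, Finset.mul_sum, ← Finset.sum_add_distrib]
        exact Finset.sum_le_sum fun j _ => hred j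
      have h2 : γ * (∑ j ∈ Finset.Icc m M, d j) ≤ C * η m := by
        have hq := hqo m M hmM
        have hr := hrel m
        calc γ * (∑ j ∈ Finset.Icc m M, d j) ≤ γ * (c * E m) := by
              exact mul_le_mul_of_nonneg_left hq hγ
          _ ≤ γ * (c * (Cu * η m)) :=
              mul_le_mul_of_nonneg_left (mul_le_mul_of_nonneg_left hr hc) hγ
          _ = C * η m := by rw [hCdef]; ring
      have h3 : (∑ j ∈ Finset.Icc m M, η j) ≤ f (M + 1) m := by
        simp only [hfdef]
        apply Finset.sum_le_sum_of_subset_of_nonneg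
        · exact Finset.Icc_subset_Icc_right (Nat.le_succ M)
        · intro j _ _; exact hη j
      have := mul_le_mul_of_nonneg_left h3 hμ0
      linarith
  -- uniform bound
  have hbound : ∀ N m, m ≤ N → f N m ≤ ((1 + C) / (1 - μ)) * η m := by
    intro N m hmN
    have h1 := key N m hmN
    have h2 := hsplit N m hmN
    have hμ' : (0:ℝ) < 1 - μ := by linarith
    rw [div_mul_eq_mul_div, le_div_iff₀ hμ']
    nlinarith [hf0 N m]
  -- contraction
  have hcontr : ∀ N m, m ≤ N → f N (m + 1) ≤ ρ * f N m := by
    intro N m hmN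
    have h1 := key N m hmN
    have h2 := hsplit N m hmN
    rw [hρdef, div_mul_eq_mul_div, le_div_iff₀ h1C]
    nlinarith [hf0 N (m + 1)]
  intro ℓ k hlk
  have hgeo : ∀ m, ℓ ≤ m → m ≤ k → f k m ≤ ρ ^ (m - ℓ) * f k ℓ := by
    intro m hℓm
    induction m, hℓm using Nat.le_induction with
    | base => intro _; simp
    | succ m hℓm ih =>
      intro hmk
      have hmk' : m ≤ k := Nat.le_of_succ_le hmk
      have h1 := hcontr k m hmk'
      have h2 := ih hmk'
      have h3 : f k (m + 1) ≤ ρ * (ρ ^ (m - ℓ) * f k ℓ) :=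
        le_trans h1 (mul_le_mul_of_nonneg_left h2 hρ0)
      have h4 : m + 1 - ℓ = (m - ℓ) + 1 := by omega
      rw [h4]
      calc f k (m + 1) ≤ ρ * (ρ ^ (m - ℓ) * f k ℓ) := h3
        _ = ρ ^ (m - ℓ + 1) * f k ℓ := by ring
  have hfkk : f k k = η k := by simp [hfdef]
  have h1 := hgeo k hlk le_rfl
  have h2 := hbound k ℓ hlk
  have hρpow : 0 ≤ ρ ^ (k - ℓ) := pow_nonneg hρ0 _
  rw [hfkk] at h1
  calc η k ≤ ρ ^ (k - ℓ) * f k ℓ := h1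
    _ ≤ ρ ^ (k - ℓ) * (((1 + C) / (1 - μ)) * η ℓ) :=
        mul_le_mul_of_nonneg_left h2 hρpow
    _ = ((1 + C) / (1 - μ)) * ρ ^ (k - ℓ) * η ℓ := by ring
end

section
/- Let (η_k)_{k∈ℕ} be a sequence of nonnegative real numbers, and let μ ∈ [0,1) and C ≥ 0 be constants such that ∑_{k=ℓ}^{N} η_{k+1} ≤ μ·∑_{k=ℓ}^{N} η_k + C·η_ℓ for all natural numbers ℓ ≤ N. Then the series ∑_{k=0}^{∞} η_k converges, and its tails α_ℓ = ∑_{k=ℓ}^{∞} η_k satisfy α_ℓ ≤ ((1+C)/(1−μ))·η_ℓ for every ℓ ∈ ℕ. -/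
/-- tail-summability estimate. If
`∑_{k=ℓ}^{N} η_{k+1} ≤ μ * ∑_{k=ℓ}^{N} η_k + C * η_ℓ` for all `ℓ ≤ N`, with `μ ∈ [0,1)`
and `C ≥ 0`, then `∑ η_k` converges and the tails `α_ℓ = ∑_{k=ℓ}^∞ η_k` satisfy
`α_ℓ ≤ ((1+C)/(1-μ)) * η_ℓ`. -/
theorem stmt_4 (η : ℕ → ℝ) (μ C : ℝ)
    (hη : ∀ k, 0 ≤ η k) (hμ0 : 0 ≤ μ) (hμ1 : μ < 1) (hC : 0 ≤ C)
    (hsum : ∀ ℓ N : ℕ, ℓ ≤ N →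
      ∑ k ∈ Finset.Icc ℓ N, η (k + 1) ≤ μ * ∑ k ∈ Finset.Icc ℓ N, η k + C * η ℓ) :
    Summable η ∧ ∀ ℓ : ℕ, (∑' k : ℕ, η (k + ℓ)) ≤ ((1 + C) / (1 - μ)) * η ℓ := by
  have hμpos : 0 < 1 - μ := by linarith
  set B : ℝ := (1 + C) / (1 - μ) with hB
  have hBnn : 0 ≤ B := div_nonneg (by linarith) hμpos.le
  -- key finite bound
  have key : ∀ ℓ N : ℕ, ℓ ≤ N → ∑ k ∈ Finset.Icc ℓ N, η k ≤ B * η ℓ := by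
    intro ℓ N hℓN
    have hshift : ∑ k ∈ Finset.Icc ℓ N, η (k + 1)
        = ∑ k ∈ Finset.Icc (ℓ + 1) (N + 1), η k := by
      rw [← Finset.Ico_add_one_right_eq_Icc, ← Finset.Ico_add_one_right_eq_Icc,
        Finset.sum_Ico_eq_sum_range, Finset.sum_Ico_eq_sum_range]
      simp only [Nat.add_sub_add_right]
      apply Finset.sum_congr rfl
      intro i _
      congr 1
      omega
    have hsplit : ∑ k ∈ Finset.Icc (ℓ + 1) (N + 1), η k
        = (∑ k ∈ Finset.Icc ℓ N, η k) + η (N + 1) - η ℓ := by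
      have h1 : ∑ k ∈ Finset.Icc ℓ (N + 1), η k
          = η ℓ + ∑ k ∈ Finset.Icc (ℓ + 1) (N + 1), η k := by
        rw [← Finset.sum_insert (by simp)]
        congr 1
        rw [Finset.Icc_add_one_left_eq_Ioc, Finset.Ioc_insert_left (by omega)]
      have h2 : ∑ k ∈ Finset.Icc ℓ (N + 1), η k
          = (∑ k ∈ Finset.Icc ℓ N, η k) + η (N + 1) := by
        exact Finset.sum_Icc_succ_top (by omega : ℓ ≤ N + 1) η
      linarith [h1, h2]
    have h := hsum ℓ N hℓN
    rw [hshift, hsplit] at h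
    have hηN : 0 ≤ η (N + 1) := hη _
    have : (1 - μ) * (∑ k ∈ Finset.Icc ℓ N, η k) ≤ (1 + C) * η ℓ := by nlinarith
    rw [hB, div_mul_eq_mul_div, le_div_iff₀ hμpos, mul_comm]
    exact this
  -- partial-sum bounds for shifted sequences
  have hrange : ∀ ℓ n : ℕ, ∑ i ∈ Finset.range n, η (i + ℓ) ≤ B * η ℓ := by
    intro ℓ n
    cases n with
    | zero => simpa using mul_nonneg hBnn (hη ℓ)
    | succ m =>
      have : ∑ i ∈ Finset.range (m + 1), η (i + ℓ)
          = ∑ k ∈ Finset.Icc ℓ (ℓ + m), η k := by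
        rw [← Finset.Ico_add_one_right_eq_Icc, Finset.sum_Ico_eq_sum_range]
        have : ℓ + m + 1 - ℓ = m + 1 := by omega
        rw [this]
        apply Finset.sum_congr rfl
        intro i _
        congr 1
        omega
      rw [this]
      exact key ℓ (ℓ + m) (by omega)
  have hsummable : Summable η := by
    have := summable_of_sum_range_le (c := B * η 0) hη (by
      intro n
      have := hrange 0 n
      simpa using this)
    exact this
  refine ⟨hsummable, fun ℓ => ?_⟩
  exact Summable.tsum_le_of_sum_range_le ((summable_nat_add_iff ℓ).2 hsummable) (hrange ℓ)
end

section
/- Let (η_k)_{k∈ℕ} be a sequence of nonnegative real numbers, and let μ ∈ [0,1) and C ≥ 0 be constants such that ∑_{k=ℓ}^{N} η_{k+1} ≤ μ·∑_{k=ℓ}^{N} η_k + C·η_ℓ for all natural numbers ℓ ≤ N. Then the tails α_ℓ = ∑_{k=ℓ}^{∞} η_k (which are finite) satisfy α_{ℓ+1} ≤ ((μ+C)/(1+C))·α_ℓ for every ℓ ∈ ℕ. -/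
/-- geometric tail decay. Under the summed inequality, the tails
`α_ℓ = ∑_{k=ℓ}^∞ η_k` are finite and satisfy `α_{ℓ+1} ≤ ((μ+C)/(1+C)) * α_ℓ`. -/
theorem stmt_5 (η : ℕ → ℝ) (μ C : ℝ)
    (hη : ∀ k, 0 ≤ η k) (hμ0 : 0 ≤ μ) (hμ1 : μ < 1) (hC : 0 ≤ C)
    (hsum : ∀ ℓ N : ℕ, ℓ ≤ N →
      ∑ k ∈ Finset.Icc ℓ N, η (k + 1) ≤ μ * ∑ k ∈ Finset.Icc ℓ N, η k + C * η ℓ) :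
    Summable η ∧
      ∀ ℓ : ℕ, (∑' k : ℕ, η (k + (ℓ + 1))) ≤ ((μ + C) / (1 + C)) * ∑' k : ℕ, η (k + ℓ) := by
  -- range form of hsum
  have hrange : ∀ ℓ n : ℕ, ∑ i ∈ Finset.range (n + 1), η (ℓ + i + 1)
      ≤ μ * ∑ i ∈ Finset.range (n + 1), η (ℓ + i) + C * η ℓ := by
    intro ℓ n
    have h := hsum ℓ (ℓ + n) (Nat.le_add_right _ _)
    rw [← Finset.Ico_add_one_right_eq_Icc, Finset.sum_Ico_eq_sum_range, Finset.sum_Ico_eq_sum_range] at h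
    simpa [Nat.add_sub_cancel_left, show ℓ + n + 1 - ℓ = n + 1 by omega] using h
  have h1C : (0:ℝ) < 1 + C := by linarith
  have h1μ : (0:ℝ) < 1 - μ := by linarith
  -- bound on partial sums from 0
  have hbound : ∀ n : ℕ, ∑ i ∈ Finset.range n, η i ≤ (1 + C) / (1 - μ) * η 0 := by
    intro n
    have mono : ∀ m n : ℕ, m ≤ n → ∑ i ∈ Finset.range m, η i ≤ ∑ i ∈ Finset.range n, η i := by
      intro m n hmn
      exact Finset.sum_le_sum_of_subset_of_nonneg (Finset.range_subset_range.2 hmn)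
        (fun i _ _ => hη i)
    have key : ∀ n : ℕ, ∑ i ∈ Finset.range (n + 2), η i ≤ (1 + C) / (1 - μ) * η 0 := by
      intro n
      have h := hrange 0 n
      simp only [Nat.zero_add] at h
      have hsplit : ∑ i ∈ Finset.range (n + 2), η i
          = (∑ i ∈ Finset.range (n + 1), η (i + 1)) + η 0 := Finset.sum_range_succ' η (n+1)
      have hmono := mono (n + 1) (n + 2) (by omega)
      rw [hsplit] at hmono ⊢
      have : (∑ i ∈ Finset.range (n + 1), η (i + 1))
          ≤ μ * ((∑ i ∈ Finset.range (n + 1), η (i + 1)) + η 0) + C * η 0 := by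
        calc ∑ i ∈ Finset.range (n + 1), η (i + 1)
            ≤ μ * ∑ i ∈ Finset.range (n + 1), η i + C * η 0 := h
          _ ≤ μ * ((∑ i ∈ Finset.range (n + 1), η (i + 1)) + η 0) + C * η 0 := by
              nlinarith [mono (n+1) (n+2) (by omega : n+1 ≤ n+2), hsplit]
      rw [div_mul_eq_mul_div, le_div_iff₀ h1μ]
      nlinarith
    calc ∑ i ∈ Finset.range n, η i ≤ ∑ i ∈ Finset.range (n + 2), η i := mono n (n+2) (by omega)
      _ ≤ _ := key n
  have hS : Summable η := summable_of_sum_range_le hη hbound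
  refine ⟨hS, fun ℓ => ?_⟩
  have hSℓ : ∀ m : ℕ, Summable (fun k => η (k + m)) := fun m =>
    (summable_nat_add_iff m).2 hS
  set A : ℕ → ℝ := fun m => ∑' k : ℕ, η (k + m) with hA
  have hAnn : ∀ m, 0 ≤ A m := fun m => tsum_nonneg (fun k => hη _)
  -- partial sums of tails bounded by tails
  have hpart : ∀ m n : ℕ, ∑ i ∈ Finset.range n, η (i + m) ≤ A m := fun m n =>
    Summable.sum_le_tsum _ (fun i _ => hη _) (hSℓ m)
  -- key: A (ℓ+1) ≤ μ * A ℓ + C * η ℓ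
  have hkey : A (ℓ + 1) ≤ μ * A ℓ + C * η ℓ := by
    apply Summable.tsum_le_of_sum_le (hSℓ (ℓ + 1))
    intro s
    obtain ⟨n, hn⟩ := s.exists_nat_subset_range
    calc ∑ k ∈ s, η (k + (ℓ + 1)) ≤ ∑ i ∈ Finset.range (n + 1), η (i + (ℓ + 1)) :=
          Finset.sum_le_sum_of_subset_of_nonneg
            (hn.trans (Finset.range_subset_range.2 (by omega))) (fun i _ _ => hη _)
      _ = ∑ i ∈ Finset.range (n + 1), η (ℓ + i + 1) := by
          apply Finset.sum_congr rfl; intro i _; ring_nf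
      _ ≤ μ * ∑ i ∈ Finset.range (n + 1), η (ℓ + i) + C * η ℓ := hrange ℓ n
      _ = μ * ∑ i ∈ Finset.range (n + 1), η (i + ℓ) + C * η ℓ := by
          congr 1; congr 1; apply Finset.sum_congr rfl; intro i _; ring_nf
      _ ≤ μ * A ℓ + C * η ℓ := by
          have := hpart ℓ (n + 1)
          nlinarith
  -- A ℓ = η ℓ + A (ℓ + 1)
  have hdecomp : A ℓ = η ℓ + A (ℓ + 1) := by
    have h0 := Summable.tsum_eq_zero_add (hSℓ ℓ)
    simp only [Nat.zero_add] at h0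
    rw [hA]
    simp only
    rw [h0]
    congr 1
    apply tsum_congr
    intro k
    congr 1
    omega
  have hη' : η ℓ = A ℓ - A (ℓ + 1) := by linarith
  rw [div_mul_eq_mul_div, le_div_iff₀ h1C]
  nlinarith [hkey, hη']
end

section
/- Let (η_k)_{k∈ℕ} be a sequence of nonnegative real numbers, and let μ ∈ [0,1) and C ≥ 0 be constants such that ∑_{k=ℓ}^{N} η_{k+1} ≤ μ·∑_{k=ℓ}^{N} η_k + C·η_ℓ for all natural numbers ℓ ≤ N. Then η_k ≤ ((1+C)/(1−μ))·((μ+C)/(1+C))^{k−ℓ}·η_ℓ for all natural numbers k ≥ ℓ. -/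
/-- the summed inequality forces geometric decay of the estimator:
`η_k ≤ ((1+C)/(1-μ)) * ((μ+C)/(1+C))^(k-ℓ) * η_ℓ` for all `k ≥ ℓ`. -/
theorem stmt_6 (η : ℕ → ℝ) (μ C : ℝ)
    (hη : ∀ k, 0 ≤ η k) (hμ0 : 0 ≤ μ) (hμ1 : μ < 1) (hC : 0 ≤ C)
    (hsum : ∀ ℓ N : ℕ, ℓ ≤ N →
      ∑ k ∈ Finset.Icc ℓ N, η (k + 1) ≤ μ * ∑ k ∈ Finset.Icc ℓ N, η k + C * η ℓ) :
    ∀ ℓ k : ℕ, ℓ ≤ k →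
      η k ≤ ((1 + C) / (1 - μ)) * ((μ + C) / (1 + C)) ^ (k - ℓ) * η ℓ := by
  have h1C : (0:ℝ) < 1 + C := by linarith
  have h1μ : (0:ℝ) < 1 - μ := by linarith
  set A : ℝ := (1 + C) / (1 - μ) with hA
  set q : ℝ := (μ + C) / (1 + C) with hq
  have hAnn : 0 ≤ A := div_nonneg (by linarith) (by linarith)
  have hqnn : 0 ≤ q := div_nonneg (by linarith) (by linarith)
  -- shift lemma for sums
  have hshift : ∀ a b : ℕ, ∑ j ∈ Finset.Icc a b, η (j + 1)
      = ∑ j ∈ Finset.Icc (a+1) (b+1), η j := by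
    intro a b
    rw [show Finset.Icc (a+1) (b+1) = (Finset.Icc a b).image (· + 1) by
      rw [Finset.image_add_right_Icc]]
    rw [Finset.sum_image (fun x _ y _ h => by omega)]
  -- Icc to range
  have hIr : ∀ a m : ℕ, ∑ j ∈ Finset.Icc a (a+m), η j
      = ∑ j ∈ Finset.range (m+1), η (a + j) := by
    intro a m
    induction m with
    | zero => simp
    | succ n ih =>
      rw [show a + (n+1) = (a+n) + 1 from rfl,
        Finset.sum_Icc_succ_top (by omega), ih]
      simp [Finset.sum_range_succ, Nat.add_assoc]
  -- bounded partial sums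
  have hS : ∀ a N : ℕ, a ≤ N → (1-μ) * ∑ j ∈ Finset.Icc a N, η j ≤ (1+C) * η a := by
    intro a N haN
    rcases eq_or_lt_of_le haN with h | h
    · subst h
      simp only [Finset.Icc_self, Finset.sum_singleton]
      nlinarith [hη a]
    · obtain ⟨M, rfl⟩ : ∃ M, N = M + 1 := ⟨N - 1, by omega⟩
      have haM : a ≤ M := by omega
      have hsplit : ∑ j ∈ Finset.Icc a (M+1), η j
          = η a + ∑ j ∈ Finset.Icc (a+1) (M+1), η j := by
        rw [Finset.Icc_eq_cons_Ioc (by omega), Finset.sum_cons, ← Finset.Icc_add_one_left_eq_Ioc]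
      have h1 := hsum a M haM
      rw [hshift] at h1
      have hsub : ∑ j ∈ Finset.Icc a M, η j ≤ ∑ j ∈ Finset.Icc a (M+1), η j := by
        apply Finset.sum_le_sum_of_subset_of_nonneg
        · exact Finset.Icc_subset_Icc_right (by omega)
        · intro i _ _; exact hη i
      nlinarith [mul_le_mul_of_nonneg_left hsub hμ0]
  have hSA : ∀ a N : ℕ, ∑ j ∈ Finset.Icc a N, η j ≤ A * η a := by
    intro a N
    by_cases haN : a ≤ N
    · have := hS a N haN
      rw [hA, div_mul_eq_mul_div, le_div_iff₀ h1μ]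
      linarith
    · rw [Finset.Icc_eq_empty haN, Finset.sum_empty]
      exact mul_nonneg hAnn (hη a)
  -- summability of tails
  have hsummable : ∀ a : ℕ, Summable (fun j => η (a + j)) := by
    intro a
    apply summable_of_sum_range_le (c := A * η a) (fun n => hη _)
    intro n
    match n with
    | 0 => simpa using mul_nonneg hAnn (hη a)
    | m + 1 => rw [← hIr a m]; exact hSA a (a + m)
  set t : ℕ → ℝ := fun a => ∑' j, η (a + j) with ht
  have htnn : ∀ a, 0 ≤ t a := fun a => tsum_nonneg (fun j => hη _)
  have hηt : ∀ a, η a ≤ t a := by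
    intro a
    have := Summable.le_tsum (hsummable a) 0 (fun j _ => hη _)
    simpa using this
  have htA : ∀ a, t a ≤ A * η a := by
    intro a
    apply Real.tsum_le_of_sum_range_le (fun n => hη _)
    intro n
    match n with
    | 0 => simpa using mul_nonneg hAnn (hη a)
    | m + 1 => rw [← hIr a m]; exact hSA a (a + m)
  have hrange_le : ∀ a m : ℕ, ∑ j ∈ Finset.Icc a (a+m), η j ≤ t a := by
    intro a m
    rw [hIr]
    exact Summable.sum_le_tsum _ (fun j _ => hη _) (hsummable a)
  have hrec : ∀ a, t a = η a + t (a+1) := by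
    intro a
    have h0 := Summable.tsum_eq_zero_add (hsummable a)
    have h1 : ∀ n : ℕ, η (a + (n+1)) = η (a+1+n) := by
      intro n; congr 1; omega
    simp only [h1, Nat.add_zero] at h0
    exact h0
  have hstep : ∀ a, t (a+1) ≤ μ * t a + C * η a := by
    intro a
    apply Real.tsum_le_of_sum_range_le (fun n => hη _)
    intro n
    match n with
    | 0 =>
      simp only [Finset.range_zero, Finset.sum_empty]
      have := mul_nonneg hμ0 (htnn a)
      have := mul_nonneg hC (hη a)
      linarith
    | m + 1 =>
      have e1 : ∑ j ∈ Finset.range (m+1), η (a + 1 + j)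
          = ∑ j ∈ Finset.Icc (a+1) ((a+1)+m), η j := (hIr (a+1) m).symm
      have e2 : ∑ j ∈ Finset.Icc (a+1) ((a+1)+m), η j
          = ∑ j ∈ Finset.Icc a (a+m), η (j+1) := by
        rw [hshift a (a+m), show a+1+m = a+m+1 from by omega]
      rw [e1, e2]
      have h1 := hsum a (a+m) (by omega)
      have h2 := hrange_le a m
      nlinarith [mul_le_mul_of_nonneg_left h2 hμ0]
  have hqstep : ∀ a, t (a+1) ≤ q * t a := by
    intro a
    rw [hq, div_mul_eq_mul_div, le_div_iff₀ h1C]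
    have h1 := hstep a
    have h2 := hrec a
    nlinarith
  have hpow : ∀ n a, t (a + n) ≤ q ^ n * t a := by
    intro n
    induction n with
    | zero => intro a; simp
    | succ m ih =>
      intro a
      have h1 : t (a + (m+1)) = t ((a+m)+1) := rfl
      calc t (a + (m+1)) ≤ q * t (a+m) := by rw [h1]; exact hqstep (a+m)
        _ ≤ q * (q ^ m * t a) := mul_le_mul_of_nonneg_left (ih a) hqnn
        _ = q ^ (m+1) * t a := by ring
  intro ℓ k hk
  have e : k = ℓ + (k - ℓ) := by omega
  calc η k ≤ t k := hηt k
    _ = t (ℓ + (k - ℓ)) := by rw [← e]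
    _ ≤ q ^ (k - ℓ) * t ℓ := hpow _ _
    _ ≤ q ^ (k - ℓ) * (A * η ℓ) := mul_le_mul_of_nonneg_left (htA ℓ) (pow_nonneg hqnn _)
    _ = A * q ^ (k - ℓ) * η ℓ := by ring
end
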